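/- The matrix S = (e^{-ℓ_{uv}})_{u,v=1}^N, where ℓ_{uv} is the path-length distance between leaves u and v in a phylogenetic tree with all pairwise leaf distances strictly positive (for u ≠ v) and ℓ_{uu} = 0, is symmetric positive definite. -/

import Mathlib

open SimpleGraph

section TreePD

variable {V : Type} {G : SimpleGraph V}

/-- Weight of a walk. -/
noncomputable def twt (w : Sym2 V → ℝ) {a b : V} (W : G.Walk a b) : ℝ :=
  (W.edges.map w).sum

/-- The unique path between two vertices of a tree. -/
noncomputable def tpath (hG : G.IsTree) (a b : V) : G.Walk a b :=
  (hG.existsUnique_path a b).choose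

lemma tpath_isPath (hG : G.IsTree) (a b : V) : (tpath hG a b).IsPath :=
  (hG.existsUnique_path a b).choose_spec.1

lemma tpath_unique (hG : G.IsTree) {a b : V} (W : G.Walk a b) (hW : W.IsPath) :
    W = tpath hG a b :=
  (hG.existsUnique_path a b).choose_spec.2 W hW

/-- Tree distance. -/
noncomputable def tD (hG : G.IsTree) (w : Sym2 V → ℝ) (a b : V) : ℝ :=
  twt w (tpath hG a b)

lemma twt_append (w : Sym2 V → ℝ) {a b c : V} (A : G.Walk a b) (B : G.Walk b c) :
    twt w (A.append B) = twt w A + twt w B := by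
  simp [twt, Walk.edges_append]

lemma twt_concat (w : Sym2 V → ℝ) {a b c : V} (A : G.Walk a b) (e : G.Adj b c) :
    twt w (A.concat e) = twt w A + w s(b, c) := by
  simp [twt, Walk.edges_concat]

lemma twt_cons (w : Sym2 V → ℝ) {a b c : V} (e : G.Adj a b) (A : G.Walk b c) :
    twt w (Walk.cons e A) = w s(a, b) + twt w A := by
  simp [twt, Walk.edges_cons]

lemma twt_reverse (w : Sym2 V → ℝ) {a b : V} (A : G.Walk a b) :
    twt w A.reverse = twt w A := by
  simp [twt, Walk.edges_reverse, List.sum_reverse]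

lemma twt_nonneg {w : Sym2 V → ℝ} (hw : ∀ e, 0 ≤ w e) {a b : V} (A : G.Walk a b) :
    0 ≤ twt w A := by
  apply List.sum_nonneg
  intro x hx
  rcases List.mem_map.1 hx with ⟨e, _, rfl⟩
  exact hw e

lemma twt_path_eq (hG : G.IsTree) (w : Sym2 V → ℝ) {a b : V} (W : G.Walk a b)
    (hW : W.IsPath) : twt w W = tD hG w a b := by
  rw [tD, ← tpath_unique hG W hW]

lemma tpath_self (hG : G.IsTree) (a : V) : tpath hG a a = Walk.nil := by
  rw [← tpath_unique hG Walk.nil]; exact Walk.IsPath.nil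

lemma tD_self (hG : G.IsTree) (w : Sym2 V → ℝ) (a : V) : tD hG w a a = 0 := by
  rw [tD, tpath_self]; simp [twt]

lemma tD_symm (hG : G.IsTree) (w : Sym2 V → ℝ) (a b : V) : tD hG w a b = tD hG w b a := by
  rw [← twt_path_eq hG w (tpath hG a b).reverse ((tpath_isPath hG a b).reverse),
    twt_reverse]
  rfl

lemma tD_nonneg (hG : G.IsTree) {w : Sym2 V → ℝ} (hw : ∀ e, 0 ≤ w e) (a b : V) :
    0 ≤ tD hG w a b := twt_nonneg hw _

lemma tpath_prefix [DecidableEq V] (hG : G.IsTree) {r p q : V} (hp : p ∈ (tpath hG r q).support) :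
    tpath hG r q = (tpath hG r p).append (tpath hG p q) := by
  conv_lhs => rw [← Walk.take_spec _ hp]
  rw [← tpath_unique hG _ ((tpath_isPath hG r q).takeUntil hp),
    ← tpath_unique hG _ ((tpath_isPath hG r q).dropUntil hp)]

lemma isPath_concat {r m p : V} {A : G.Walk r m} (hA : A.IsPath) (e : G.Adj m p)
    (hp : p ∉ A.support) : (A.concat e).IsPath := by
  rw [← Walk.isPath_reverse_iff, Walk.reverse_concat]
  exact (hA.reverse).cons (by simpa [Walk.support_reverse] using hp)

lemma tpath_adj (hG : G.IsTree) {a b : V} (e : G.Adj a b) :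
    tpath hG a b = Walk.cons e Walk.nil := by
  rw [← tpath_unique hG (Walk.cons e Walk.nil)]
  simp [Walk.cons_isPath_iff, Walk.IsPath.nil, e.ne]

/-- Dichotomy for adjacent vertices in a tree: the root path to one extends the root path to
the other. -/
lemma tpath_adj_dichotomy [DecidableEq V] (hG : G.IsTree) (r : V) {m p : V} (e : G.Adj m p) :
    tpath hG r p = (tpath hG r m).concat e ∨ tpath hG r m = (tpath hG r p).concat e.symm := by
  by_cases hp : p ∈ (tpath hG r m).support
  · right
    rw [tpath_prefix hG hp, tpath_adj hG (e.symm : G.Adj p m), Walk.concat_eq_append]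
  · left
    exact (tpath_unique hG _ (isPath_concat (tpath_isPath hG r m) e hp)).symm

lemma tD_le_adj [DecidableEq V] (hG : G.IsTree) {w : Sym2 V → ℝ} (hw : ∀ e, 0 ≤ w e) {nb p : V}
    (e : G.Adj nb p) (a : V) : tD hG w a p ≤ tD hG w a nb + w s(nb, p) := by
  by_cases hp : p ∈ (tpath hG a nb).support
  · have h1 : tD hG w a nb = tD hG w a p + tD hG w p nb := by
      rw [tD, tpath_prefix hG hp, twt_append]; rfl
    have h2 : 0 ≤ tD hG w p nb := tD_nonneg hG hw p nb
    have h3 : 0 ≤ w s(nb, p) := hw _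
    linarith
  · have h1 : tD hG w a p = tD hG w a nb + w s(nb, p) := by
      rw [tD, ← tpath_unique hG _ (isPath_concat (tpath_isPath hG a nb) e hp), twt_concat]
      rfl
    linarith

lemma tpath_parent (hG : G.IsTree) {r p : V} (h : p ≠ r) :
    ∃ (nb : V) (e : G.Adj nb p), tpath hG r p = (tpath hG r nb).concat e := by
  have hnil : ¬ (tpath hG r p).reverse.Nil := Walk.not_nil_of_ne h
  rcases Walk.not_nil_iff.1 hnil with ⟨nb, e, q, hq⟩
  have hrev : tpath hG r p = (Walk.cons e q).reverse := by
    rw [← hq, Walk.reverse_reverse]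
  have hqpath : q.reverse.IsPath := by
    have : (Walk.cons e q).IsPath := by
      rw [← hq]; exact (tpath_isPath hG r p).reverse
    exact (this.of_cons).reverse
  refine ⟨nb, e.symm, ?_⟩
  rw [hrev, Walk.reverse_cons, ← Walk.concat_eq_append, ← tpath_unique hG _ hqpath]

lemma tpath_prefix_length [DecidableEq V] (hG : G.IsTree) {r p q : V} (hp : p ∈ (tpath hG r q).support) :
    (tpath hG r q).length = (tpath hG r p).length + (tpath hG p q).length := by
  conv_lhs => rw [tpath_prefix hG hp]
  exact Walk.length_append _ _

/-- Key structural lemma: if `p` has parent `nb` (w.r.t. root `r`) and `q` is a vertex distinct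
from `p` whose root path is no longer than that of `p`, then the path from `p` to `q` starts by
going to `nb`. -/
lemma tD_parent_step [DecidableEq V] (hG : G.IsTree) (w : Sym2 V → ℝ) {r p nb : V} (e : G.Adj nb p)
    (hpar : tpath hG r p = (tpath hG r nb).concat e) {q : V} (hq : q ≠ p)
    (hdep : (tpath hG r q).length ≤ (tpath hG r p).length) :
    tD hG w p q = w s(nb, p) + tD hG w nb q := by
  have hRpath : (tpath hG p q).IsPath := tpath_isPath hG p q
  have hnil : ¬ (tpath hG p q).Nil := Walk.not_nil_of_ne (Ne.symm hq)
  rcases Walk.not_nil_iff.1 hnil with ⟨m, e', R', hR⟩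
  have hR'path : R'.IsPath := by
    have : (Walk.cons e' R').IsPath := by rw [← hR]; exact hRpath
    exact this.of_cons
  by_cases hm : m = nb
  · subst hm
    have : tD hG w p q = w s(p, m) + tD hG w m q := by
      rw [tD, hR, twt_cons, twt_path_eq hG w R' hR'path]
    rwa [Sym2.eq_swap] at this
  · exfalso
    -- m ≠ nb. First show p ∈ support (tpath r m).
    have hpm : p ∈ (tpath hG r m).support := by
      rcases tpath_adj_dichotomy hG r (e'.symm : G.Adj m p) with hc | hc
      · -- tpath r p = (tpath r m).concat e'.symm ; also = (tpath r nb).concat e ⇒ nb = m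
        exfalso
        have hsup : ((tpath hG r nb).concat e).support = ((tpath hG r m).concat e'.symm).support := by
          rw [← hpar, ← hc]
        rw [Walk.support_concat, Walk.support_concat] at hsup
        have hsup2 : (tpath hG r nb).support = (tpath hG r m).support := by
          apply List.append_left_injective [p]
          simpa [List.concat_eq_append] using hsup
        have h1 : nb ∈ (tpath hG r m).support := by
          rw [← hsup2]; exact Walk.end_mem_support _
        have h2 : m ∈ (tpath hG r nb).support := by
          rw [hsup2]; exact Walk.end_mem_support _
        have l1 := tpath_prefix_length hG h1
        have l2 := tpath_prefix_length hG h2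
        have : (tpath hG nb m).length = 0 := by omega
        exact hm (Walk.eq_of_length_eq_zero this).symm
      · rw [hc, Walk.support_concat]
        simp [Walk.end_mem_support]
    -- Now p lies on the unique path r → m; derive that p lies on tpath r q.
    have hWp : p ∈ ((tpath hG r q).append R'.reverse).support := by
      have hbp : (tpath hG r m) = ((tpath hG r q).append R'.reverse).bypass := by
        exact (tpath_unique hG _ (Walk.bypass_isPath _)).symm
      have : p ∈ ((tpath hG r q).append R'.reverse).bypass.support := by
        rw [← hbp]; exact hpm
      exact Walk.support_bypass_subset _ this
    have hpq' : p ∈ (tpath hG r q).support ∨ p ∈ R'.reverse.support := by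
      rcases (Walk.mem_support_append_iff _ _).1 hWp with h | h
      · exact Or.inl h
      · exact Or.inr h
    have hpnotR' : p ∉ R'.support := by
      have : (Walk.cons e' R').IsPath := by rw [← hR]; exact hRpath
      exact ((Walk.cons_isPath_iff _ _).1 this).2
    have hpq : p ∈ (tpath hG r q).support := by
      rcases hpq' with h | h
      · exact h
      · exact absurd (by simpa [Walk.support_reverse] using h) hpnotR'
    -- length contradiction
    have hlen := tpath_prefix_length hG hpq
    have hlen1 : 1 ≤ (tpath hG p q).length := by
      have : (tpath hG p q).length = R'.length + 1 := by rw [hR]; simp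
      omega
    omega


section Quad

variable [Fintype V]

noncomputable def tB (hG : G.IsTree) (w : Sym2 V → ℝ) (f g : V → ℝ) : ℝ :=
  ∑ p, ∑ q, f p * g q * Real.exp (-(tD hG w p q))

variable {hG : G.IsTree} {w : Sym2 V → ℝ}

lemma tB_comm (f g : V → ℝ) : tB hG w f g = tB hG w g f := by
  rw [tB, tB, Finset.sum_comm]
  refine Finset.sum_congr rfl fun q _ => Finset.sum_congr rfl fun p _ => ?_
  rw [tD_symm hG w p q]; ring

lemma tB_add_left (f f' g : V → ℝ) :
    tB hG w (fun b => f b + f' b) g = tB hG w f g + tB hG w f' g := by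
  simp only [tB, add_mul, Finset.sum_add_distrib]

lemma tB_single_left [DecidableEq V] (c : ℝ) (p : V) (g : V → ℝ) :
    tB hG w (fun b => c * (if b = p then 1 else 0)) g
      = c * ∑ b, g b * Real.exp (-(tD hG w p b)) := by
  rw [tB, Finset.sum_eq_single p]
  · rw [Finset.mul_sum]
    refine Finset.sum_congr rfl fun b _ => ?_
    simp; ring
  · intro a _ ha
    simp [ha]
  · simp

lemma tQ_expand [DecidableEq V] (f : V → ℝ) (p : V) (c : ℝ) :
    tB hG w (fun b => f b + c * (if b = p then 1 else 0))
        (fun b => f b + c * (if b = p then 1 else 0))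
      = tB hG w f f + 2 * c * (∑ b, f b * Real.exp (-(tD hG w p b)))
        + c ^ 2 * Real.exp (-(tD hG w p p)) := by
  rw [tB_add_left]
  rw [tB_comm (f := f), tB_comm (f := fun b => c * (if b = p then 1 else 0))]
  rw [tB_add_left, tB_add_left]
  rw [tB_comm (f := f) (g := fun b => c * (if b = p then 1 else 0))]
  rw [tB_single_left, tB_single_left]
  have : (∑ b, (fun b => c * (if b = p then 1 else 0)) b * Real.exp (-(tD hG w p b)))
      = c * Real.exp (-(tD hG w p p)) := by
    rw [Finset.sum_eq_single p] <;> simp +contextual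
  rw [this]
  ring

lemma tQ_triv (y : V → ℝ) (r : V) (h : ∀ p, p ≠ r → y p = 0) :
    tB hG w y y = y r ^ 2 * Real.exp (-(tD hG w r r)) := by
  rw [tB, Finset.sum_eq_single r]
  · rw [Finset.sum_eq_single r]
    · ring
    · intro b _ hb; simp [h b hb]
    · simp
  · intro a _ ha
    apply Finset.sum_eq_zero
    intro b _
    simp [h a ha]
  · simp

lemma tQ_trivcase (hG : G.IsTree) (w : Sym2 V → ℝ) (r : V) (s : Finset V)
    (hall : ∀ q ∈ s, (tpath hG r q).length = 0) (y : V → ℝ) (hy : ∀ p, p ∉ s → y p = 0) :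
    0 ≤ tB hG w y y ∧
      (tB hG w y y = 0 → ∀ a : V, (∑ b, if tD hG w a b = 0 then y b else 0) = 0) := by
  have hyr : ∀ p, p ≠ r → y p = 0 := by
    intro p hp
    by_cases hps : p ∈ s
    · exact absurd (Walk.eq_of_length_eq_zero (hall p hps)) (Ne.symm hp)
    · exact hy p hps
  have hQ : tB hG w y y = y r ^ 2 := by
    rw [tQ_triv y r hyr, tD_self]; simp
  constructor
  · rw [hQ]; positivity
  · intro h0 a
    rw [hQ] at h0
    have hyr0 : y r = 0 := by
      have := sq_eq_zero_iff.mp h0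
      exact this
    have hall0 : ∀ b, y b = 0 := by
      intro b
      by_cases hb : b = r
      · rw [hb]; exact hyr0
      · exact hyr b hb
    apply Finset.sum_eq_zero
    intro b _
    simp [hall0 b]


lemma tQ_key [DecidableEq V] (hG : G.IsTree) {w : Sym2 V → ℝ} (hw : ∀ e, 0 ≤ w e) (r : V) :
    ∀ (n : ℕ) (s : Finset V), (∑ q ∈ s, (tpath hG r q).length) ≤ n →
      ∀ (y : V → ℝ), (∀ p, p ∉ s → y p = 0) →
      0 ≤ tB hG w y y ∧
      (tB hG w y y = 0 → ∀ a : V, (∑ b, if tD hG w a b = 0 then y b else 0) = 0) := by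
  intro n
  induction n with
  | zero =>
    intro s hs y hy
    refine tQ_trivcase hG w r s ?_ y hy
    intro q hq
    have := Finset.sum_le_sum_of_subset (Finset.singleton_subset_iff.mpr hq)
      (f := fun q => (tpath hG r q).length)
    simp only [Finset.sum_singleton] at this
    omega
  | succ n IH =>
    intro s hs y hy
    by_cases hall : ∀ q ∈ s, (tpath hG r q).length = 0
    · exact tQ_trivcase hG w r s hall y hy
    · push_neg at hall
      obtain ⟨q0, hq0s, hq0⟩ := hall
      obtain ⟨p, hps, hpmax⟩ := Finset.exists_max_image s (fun q => (tpath hG r q).length)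
        ⟨q0, hq0s⟩
      have hplen : 1 ≤ (tpath hG r p).length := by
        have := hpmax q0 hq0s
        omega
      have hpr : p ≠ r := by
        intro h
        rw [h, tpath_self] at hplen
        simp at hplen
      obtain ⟨nb, e, hpar⟩ := tpath_parent hG hpr
      have hnbp : nb ≠ p := e.ne
      obtain ⟨ω, hωdef⟩ : ∃ ω, ω = w s(nb, p) := ⟨_, rfl⟩
      have hω : 0 ≤ ω := by rw [hωdef]; exact hw _
      obtain ⟨t, htdef⟩ : ∃ t, t = Real.exp (-ω) := ⟨_, rfl⟩
      have ht1 : t ≤ 1 := by rw [htdef]; exact Real.exp_le_one_iff.mpr (by linarith)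
      have ht0 : 0 < t := by rw [htdef]; exact Real.exp_pos _
      obtain ⟨y', hy'def⟩ : ∃ y' : V → ℝ, y' = Function.update y p 0 := ⟨_, rfl⟩
      obtain ⟨c, hcdef⟩ : ∃ c : ℝ, c = ∑ b, y' b * Real.exp (-(tD hG w nb b)) := ⟨_, rfl⟩
      have hlnb : (tpath hG r nb).length + 1 = (tpath hG r p).length := by
        conv_rhs => rw [hpar]
        rw [Walk.length_concat]
      have hrow : ∀ b, y' b * Real.exp (-(tD hG w p b))
          = t * (y' b * Real.exp (-(tD hG w nb b))) := by
        intro b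
        by_cases hb : y' b = 0
        · simp [hb]
        · have hbp : b ≠ p := by
            intro h
            apply hb
            rw [h, hy'def]
            exact Function.update_self _ _ _
          have hbs : b ∈ s := by
            by_contra hbs
            apply hb
            rw [hy'def, Function.update_of_ne hbp]
            exact hy b hbs
          have hD := tD_parent_step hG w e hpar hbp (hpmax b hbs)
          rw [hD, ← hωdef, neg_add, Real.exp_add, htdef]
          ring
      have hy_eq : y = fun b => y' b + y p * (if b = p then 1 else 0) := by
        funext b
        by_cases hb : b = p
        · subst hb
          simp [hy'def]
        · simp [hy'def, Function.update_of_ne hb, hb]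
      obtain ⟨z, hzdef⟩ : ∃ z : V → ℝ, z = fun b => y' b + (-c) * (if b = nb then 1 else 0) :=
        ⟨_, rfl⟩
      have hrowsum : (∑ b, y' b * Real.exp (-(tD hG w p b))) = t * c := by
        rw [Finset.sum_congr rfl (fun b _ => hrow b), ← Finset.mul_sum, hcdef]
      have hQy : tB hG w y y = tB hG w y' y' + 2 * (y p) * (t * c) + (y p) ^ 2 := by
        conv_lhs => rw [hy_eq]
        rw [tQ_expand, hrowsum, tD_self]
        simp
      have hQz : tB hG w z z = tB hG w y' y' - c ^ 2 := by
        rw [hzdef, tQ_expand, ← hcdef, tD_self]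
        simp
        ring
      obtain ⟨s', hs'def⟩ : ∃ s' : Finset V, s' = insert nb (s.erase p) := ⟨_, rfl⟩
      have hsum_erase : (∑ q ∈ s.erase p, (tpath hG r q).length) + (tpath hG r p).length
          = ∑ q ∈ s, (tpath hG r q).length := Finset.sum_erase_add s _ hps
      have hμ : (∑ q ∈ s', (tpath hG r q).length) ≤ n := by
        by_cases hnb : nb ∈ s.erase p
        · rw [hs'def, Finset.insert_eq_self.mpr hnb]
          omega
        · rw [hs'def, Finset.sum_insert hnb]
          omega
      have hsupz : ∀ b, b ∉ s' → z b = 0 := by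
        intro b hb
        rw [hs'def] at hb
        simp only [Finset.mem_insert, not_or] at hb
        obtain ⟨hb1, hb2⟩ := hb
        by_cases hbp : b = p
        · subst hbp
          simp only [hzdef, hb1, if_false, mul_zero, add_zero]
          simp [hy'def]
        · simp only [hzdef, hb1, if_false, mul_zero, add_zero]
          rw [hy'def, Function.update_of_ne hbp]
          exact hy b (fun hbs => hb2 (Finset.mem_erase.mpr ⟨hbp, hbs⟩))
      have IHz := IH s' hμ z hsupz
      have hQznn : 0 ≤ tB hG w z z := IHz.1
      have hiden : tB hG w y y
          = (y p + t * c) ^ 2 + (tB hG w y' y' - c ^ 2) + (1 - t ^ 2) * c ^ 2 := by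
        rw [hQy]; ring
      have h1t2 : 0 ≤ 1 - t ^ 2 := by nlinarith
      have hpsd : 0 ≤ tB hG w y y := by
        rw [hiden, ← hQz]
        have := sq_nonneg (y p + t * c)
        nlinarith [sq_nonneg c]
      refine ⟨hpsd, ?_⟩
      intro hQ0 a
      have e1 : 0 ≤ (y p + t * c) ^ 2 := sq_nonneg _
      have e2 : 0 ≤ tB hG w y' y' - c ^ 2 := by rw [← hQz]; exact hQznn
      have e3 : 0 ≤ (1 - t ^ 2) * c ^ 2 := by positivity
      rw [hiden] at hQ0
      have h31 : (1 - t ^ 2) * c ^ 2 = 0 := by linarith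
      have h32 : (y p + t * c) ^ 2 = 0 := by linarith
      have h33 : tB hG w y' y' - c ^ 2 = 0 := by linarith
      have h32' : y p + t * c = 0 := sq_eq_zero_iff.mp h32
      have hz0 : tB hG w z z = 0 := by rw [hQz]; linarith
      have hclass := IHz.2 hz0 a
      have hyzb : ∀ b, y b = z b + c * (if b = nb then 1 else 0)
          + y p * (if b = p then 1 else 0) := by
        intro b
        rw [hzdef]
        by_cases hb : b = p
        · subst hb
          simp [hy'def, hnbp.symm]
        · simp only [hy'def, Function.update_of_ne hb, hb, if_false, mul_zero, add_zero]
          ring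
      have sδ : ∀ (v0 : V) (k : ℝ),
          (∑ b, if tD hG w a b = 0 then k * (if b = v0 then 1 else 0) else 0)
            = (if tD hG w a v0 = 0 then k else 0) := by
        intro v0 k
        rw [Finset.sum_eq_single v0]
        · by_cases h : tD hG w a v0 = 0 <;> simp [h]
        · intro b _ hb
          by_cases h : tD hG w a b = 0 <;> simp [h, hb]
        · simp
      have hsum : (∑ b, if tD hG w a b = 0 then y b else 0)
          = (∑ b, if tD hG w a b = 0 then z b else 0)
            + (if tD hG w a nb = 0 then c else 0) + (if tD hG w a p = 0 then y p else 0) := by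
        have t1 : ∀ b, (if tD hG w a b = 0 then y b else 0)
            = (if tD hG w a b = 0 then z b else 0)
              + (if tD hG w a b = 0 then c * (if b = nb then 1 else 0) else 0)
              + (if tD hG w a b = 0 then y p * (if b = p then 1 else 0) else 0) := by
          intro b
          by_cases h : tD hG w a b = 0
          · simp only [h, if_true]
            exact hyzb b
          · simp [h]
        rw [Finset.sum_congr rfl (fun b _ => t1 b), Finset.sum_add_distrib,
          Finset.sum_add_distrib, sδ nb c, sδ p (y p)]
      rw [hsum, hclass, zero_add]
      by_cases ht : t = 1
      · have hω0 : ω = 0 := by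
          have : (-ω) = 0 := Real.exp_injective
            (by rw [Real.exp_zero, ← htdef, ht])
          linarith
        have hyp : y p = -c := by
          rw [ht] at h32'
          linarith
        have hiff : (tD hG w a p = 0) ↔ (tD hG w a nb = 0) := by
          have l1 := tD_le_adj hG hw e a
          have l2 := tD_le_adj hG hw (e.symm) a
          have hswap : w s(p, nb) = ω := by rw [hωdef, Sym2.eq_swap]
          have n1 := tD_nonneg hG hw a p
          have n2 := tD_nonneg hG hw a nb
          rw [hswap] at l2
          rw [← hωdef] at l1
          constructor <;> intro h <;> linarith
        by_cases hD : tD hG w a nb = 0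
        · rw [if_pos hD, if_pos (hiff.mpr hD), hyp]
          ring
        · rw [if_neg hD, if_neg (fun h => hD (hiff.mp h))]
          ring
      · have htlt : t < 1 := lt_of_le_of_ne ht1 ht
        have hc0 : c = 0 := by
          have h1t2' : 0 < 1 - t ^ 2 := by nlinarith
          have : c ^ 2 = 0 := by
            by_contra hc
            have : 0 < c ^ 2 := lt_of_le_of_ne (sq_nonneg c) (Ne.symm hc)
            nlinarith
          exact sq_eq_zero_iff.mp this
        have hyp : y p = 0 := by rw [hc0] at h32'; linarith
        simp [hc0, hyp]

end Quad

end TreePD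

/-- If d is a tree metric on the N leaves of an edge-weighted tree (the path-length
distance, with all pairwise leaf distances strictly positive off the diagonal), then the
matrix (e^{-d(u,v)})_{u,v} is symmetric positive definite. -/
theorem tree_exp_matrix_posDef {N : ℕ} (d : Fin N → Fin N → ℝ)
    (V : Type) [Fintype V] (G : SimpleGraph V) (hG : G.IsTree)
    (w : Sym2 V → ℝ) (hw : ∀ e, 0 ≤ w e)
    (leaf : Fin N → V)
    (hd : ∀ u v : Fin N, ∀ pth : G.Walk (leaf u) (leaf v), pth.IsPath →
      d u v = (pth.edges.map w).sum)
    (hpos : ∀ u v : Fin N, u ≠ v → 0 < d u v) :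
    (Matrix.of fun u v : Fin N => Real.exp (-(d u v))).PosDef := by
  classical
  have hdd : ∀ u v : Fin N, d u v = tD hG w (leaf u) (leaf v) := fun u v =>
    hd u v _ (tpath_isPath hG _ _)
  have hsymm : ∀ u v, d u v = d v u := by
    intro u v
    rw [hdd u v, hdd v u, tD_symm]
  have hself : ∀ u, d u u = 0 := by
    intro u
    rw [hdd u u, tD_self]
  refine Matrix.posDef_iff_dotProduct_mulVec.mpr ⟨?_, ?_⟩
  · show _ = _
    ext i j
    simp only [Matrix.conjTranspose_apply, Matrix.of_apply, star_trivial]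
    rw [hsymm j i]
  · intro x hx
    have hne : Nonempty V := hG.isConnected.nonempty
    obtain ⟨r⟩ := hne
    obtain ⟨y, hydef⟩ : ∃ y : V → ℝ,
        y = fun p => ∑ u ∈ Finset.univ.filter (fun u => leaf u = p), x u := ⟨_, rfl⟩
    have hfib : ∀ F : V → ℝ, (∑ p, y p * F p) = ∑ u, x u * F (leaf u) := by
      intro F
      rw [hydef]
      simp only
      have h1 : ∀ p : V, (∑ u ∈ Finset.univ.filter (fun u => leaf u = p), x u) * F p
          = ∑ u ∈ Finset.univ.filter (fun u => leaf u = p), x u * F (leaf u) := by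
        intro p
        rw [Finset.sum_mul]
        refine Finset.sum_congr rfl fun u hu => ?_
        rw [(Finset.mem_filter.mp hu).2]
      rw [Finset.sum_congr rfl fun p _ => h1 p]
      exact Finset.sum_fiberwise_of_maps_to (fun u _ => Finset.mem_univ _) _
    have hform : dotProduct (star x)
          ((Matrix.of fun u v : Fin N => Real.exp (-(d u v))).mulVec x)
        = tB hG w y y := by
      have hrhs : tB hG w y y = ∑ u, x u * ∑ v, x v * Real.exp (-(d u v)) := by
        rw [tB]
        have h2 : ∀ p : V, (∑ q, y p * y q * Real.exp (-(tD hG w p q)))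
            = y p * ∑ q, y q * Real.exp (-(tD hG w p q)) := by
          intro p
          rw [Finset.mul_sum]
          exact Finset.sum_congr rfl fun q _ => by ring
        rw [Finset.sum_congr rfl fun p _ => h2 p,
          hfib (fun p => ∑ q, y q * Real.exp (-(tD hG w p q)))]
        refine Finset.sum_congr rfl fun u _ => ?_
        rw [hfib (fun q => Real.exp (-(tD hG w (leaf u) q)))]
        congr 1
        exact Finset.sum_congr rfl fun v _ => by rw [← hdd u v]
      rw [hrhs]
      show (∑ u, star (x u) * (∑ v, Real.exp (-(d u v)) * x v)) = _
      refine Finset.sum_congr rfl fun u _ => ?_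
      rw [star_trivial, Finset.mul_sum, Finset.mul_sum]
      exact Finset.sum_congr rfl fun v _ => by ring
    have hkey := tQ_key hG hw r (∑ q ∈ (Finset.univ : Finset V), (tpath hG r q).length)
      Finset.univ le_rfl y (fun p hp => absurd (Finset.mem_univ p) hp)
    obtain ⟨hpsd, heq⟩ := hkey
    rw [hform]
    rcases lt_or_eq_of_le hpsd with h | h
    · exact h
    · exfalso
      apply hx
      funext u
      have hcls := heq h.symm (leaf u)
      have hx_u : (∑ b, if tD hG w (leaf u) b = 0 then y b else 0) = x u := by
        have h1 : ∀ b : V, (if tD hG w (leaf u) b = 0 then y b else 0)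
            = y b * (if tD hG w (leaf u) b = 0 then 1 else 0) := by
          intro b
          by_cases h : tD hG w (leaf u) b = 0 <;> simp [h]
        rw [Finset.sum_congr rfl fun b _ => h1 b,
          hfib (fun b => if tD hG w (leaf u) b = 0 then 1 else 0)]
        rw [Finset.sum_eq_single u]
        · rw [if_pos (by rw [← hdd u u]; exact hself u)]
          ring
        · intro v _ hv
          rw [if_neg (by rw [← hdd u v]; exact ne_of_gt (hpos u v (fun h => hv h.symm)))]
          ring
        · intro h
          exact absurd (Finset.mem_univ u) h
      show x u = 0
      rw [← hx_u]
      exact hcls
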